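/- Let g : Fin 2 → ℝ be nonnegative with (g 0 + g 1)/2 = 1 and let q ≥ 2 be real. Then (g(0)^(q-1) - g(1)^(q-1)) * (g(0) - g(1)) ≥ (2/ln 2) * (1/(q-1)) * ((g(0)^q + g(1)^q)/2) * ln((g(0)^q + g(1)^q)/2). -/

import Mathlib

open Real

lemma polyP {x y : ℝ} (hy : 0 < y) (hyx : y ≤ x) (hx : x ≤ 1) :
    y*(1+x)^2*(1-y)*(1-x*y) + (y*(1-x)+x*(1-y))*((2*y+x*y)-1)*(1+x*y)
      ≤ 2*y*(1-y)*(1+x)*(1+x*y) := by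
  nlinarith [mul_nonneg (mul_nonneg hy.le (sub_nonneg.2 hyx)) (sub_nonneg.2 hx),
    mul_nonneg (sub_nonneg.2 hyx) (sub_nonneg.2 hx),
    mul_nonneg (mul_nonneg hy.le hy.le) (sub_nonneg.2 hyx),
    mul_nonneg (mul_nonneg (sub_nonneg.2 hyx) (sub_nonneg.2 hx)) (sub_nonneg.2 (le_trans hyx hx)),
    sq_nonneg (1-x), sq_nonneg (x-y), sq_nonneg (1-y), hy.le,
    mul_pos hy hy, mul_nonneg hy.le (sub_nonneg.2 hx),
    mul_nonneg (mul_nonneg hy.le (sub_nonneg.2 hx)) (sub_nonneg.2 hx),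
    mul_nonneg (mul_nonneg (mul_nonneg hy.le (sub_nonneg.2 hx)) (sub_nonneg.2 hx)) (sub_nonneg.2 hyx)]

set_option maxHeartbeats 1000000 in
lemma keyIneq {x y A C lx l : ℝ} (hx0 : 0<x) (hx1 : x<1) (hy0 : 0<y) (hyx : y ≤ x)
    (hAC0 : 0 ≤ A - C) (hAC : (A-C)*(1+x*y) ≤ x*(1-y)) (hlx0 : lx ≤ 0) (hlx : (-lx)*x ≤ 1-x)
    (hl0 : 0 ≤ l) (hl : l*y ≤ 1-y) :
    (A-C)*(1-x*y)/x^2 + (l-lx)*(2*y+x*y-1)/(1+x)^2 - (-lx)*y^2/(1+x*y) - 2*(1-y)/(x*(1+x)) ≤ 0 := by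
  have hx1' : x ≤ 1 := hx1.le
  have hy1 : y < 1 := lt_of_le_of_lt hyx hx1
  have hxy0 : (0:ℝ) < 1 + x*y := by nlinarith
  have hxp : (0:ℝ) < 1 + x := by linarith
  have hxy1 : x*y ≤ 1 := by nlinarith
  have hm : 0 < x^2*y*(1+x)^2*(1+x*y) := by positivity
  rw [← mul_le_mul_iff_of_pos_right hm]
  have heq : ((A-C)*(1-x*y)/x^2 + (l-lx)*(2*y+x*y-1)/(1+x)^2 - (-lx)*y^2/(1+x*y)
      - 2*(1-y)/(x*(1+x))) * (x^2*y*(1+x)^2*(1+x*y))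
      = (A-C)*(1-x*y)*y*(1+x)^2*(1+x*y) + (l-lx)*(2*y+x*y-1)*(x^2*y*(1+x*y))
        + lx*y^2*(x^2*y*(1+x)^2) - 2*(1-y)*(x*y*(1+x)*(1+x*y)) := by
    field_simp
    ring
  rw [heq, zero_mul]
  have hT3 : lx*y^2*(x^2*y*(1+x)^2) ≤ 0 :=
    mul_nonpos_of_nonpos_of_nonneg (mul_nonpos_of_nonpos_of_nonneg hlx0 (sq_nonneg y)) (by positivity)
  have h2 : (0:ℝ) ≤ (1-x*y)*y*(1+x)^2 :=
    mul_nonneg (mul_nonneg (by linarith) hy0.le) (by positivity)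
  have hT1 : (A-C)*(1-x*y)*y*(1+x)^2*(1+x*y) ≤ x*(1-y)*((1-x*y)*y*(1+x)^2) := by
    have h4 := mul_le_mul_of_nonneg_right hAC h2
    refine le_trans (le_of_eq (by ring)) h4
  rcases le_or_gt (2*y+x*y) 1 with hcase | hcase
  · have hT2 : (l-lx)*(2*y+x*y-1)*(x^2*y*(1+x*y)) ≤ 0 := by
      have h1 : 0 ≤ l - lx := by linarith
      have h3 : (0:ℝ) ≤ x^2*y*(1+x*y) := by positivity
      have : (l-lx)*(2*y+x*y-1) ≤ 0 :=
        mul_nonpos_of_nonneg_of_nonpos h1 (by linarith)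
      exact mul_nonpos_of_nonpos_of_nonneg this h3
    have e1 : (0:ℝ) ≤ x*y*(1-y)*(1+x) :=
      mul_nonneg (mul_nonneg (mul_nonneg hx0.le hy0.le) (by linarith)) hxp.le
    have e2 : (0:ℝ) ≤ 2*(1+x*y) - (1-x*y)*(1+x) := by nlinarith
    have hfin : x*(1-y)*((1-x*y)*y*(1+x)^2) ≤ 2*(1-y)*(x*y*(1+x)*(1+x*y)) := by
      nlinarith [mul_nonneg e1 e2]
    linarith
  · have h3 : (0:ℝ) ≤ (2*y+x*y-1)*(1+x*y) :=
      mul_nonneg (by linarith) hxy0.le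
    have h1 : l*(x^2*y) ≤ (1-y)*x^2 := by
      have := mul_le_mul_of_nonneg_left hl (sq_nonneg x)
      nlinarith [this]
    have h2' : (-lx)*(x^2*y) ≤ (1-x)*(x*y) := by
      have := mul_le_mul_of_nonneg_left hlx (mul_nonneg hx0.le hy0.le)
      nlinarith [this]
    have hT2 : (l-lx)*(2*y+x*y-1)*(x^2*y*(1+x*y))
        ≤ ((1-y)*x^2+(1-x)*(x*y))*((2*y+x*y-1)*(1+x*y)) := by
      have h4 := mul_le_mul_of_nonneg_right (add_le_add h1 h2') h3
      refine le_trans (le_of_eq (by ring)) h4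
    have hP := polyP hy0 hyx hx1'
    have hPx := mul_le_mul_of_nonneg_left hP hx0.le
    nlinarith [hPx]


noncomputable def Fk (y l x : ℝ) : ℝ :=
  (1+x*y) * ((l - Real.log x) * Real.log (1+x) + Real.log x * Real.log (1+x*y)) - l*Real.log 2*(x+y)

noncomputable def Fk1 (y l x : ℝ) : ℝ :=
  y * ((l - Real.log x) * Real.log (1+x) + Real.log x * Real.log (1+x*y))
    + (1+x*y) * ((Real.log (1+x*y) - Real.log (1+x))/x + (l - Real.log x)/(1+x)
        + y*Real.log x/(1+x*y))
    - l*Real.log 2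

noncomputable def Fk2 (y l x : ℝ) : ℝ :=
  (Real.log (1+x) - Real.log (1+x*y))*(1-x*y)/x^2 + (l - Real.log x)*(2*y+x*y-1)/(1+x)^2
    - (-Real.log x)*y^2/(1+x*y) - 2*(1-y)/(x*(1+x))

lemma hasDeriv_Fk (y l : ℝ) (hy : 0 < y) {x : ℝ} (hx : 0 < x) :
    HasDerivAt (Fk y l) (Fk1 y l x) x := by
  have hxp : (0:ℝ) < 1 + x := by linarith
  have hxy0 : (0:ℝ) < 1 + x*y := by nlinarith
  have hlog : HasDerivAt Real.log x⁻¹ x := Real.hasDerivAt_log hx.ne'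
  have h1x : HasDerivAt (fun t : ℝ => 1+t) 1 x := (hasDerivAt_id x).const_add 1
  have hA : HasDerivAt (fun t : ℝ => Real.log (1+t)) (1/(1+x)) x := h1x.log hxp.ne'
  have hxy : HasDerivAt (fun t : ℝ => 1+t*y) y x := by
    simpa using ((hasDerivAt_id x).mul_const y).const_add 1
  have hC : HasDerivAt (fun t : ℝ => Real.log (1+t*y)) (y/(1+x*y)) x := hxy.log hxy0.ne'
  have hg : HasDerivAt (fun t : ℝ => (l - Real.log t) * Real.log (1+t) + Real.log t * Real.log (1+t*y))
      ((-x⁻¹)*Real.log (1+x) + (l - Real.log x)*(1/(1+x))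
        + (x⁻¹*Real.log (1+x*y) + Real.log x*(y/(1+x*y)))) x :=
    ((hlog.const_sub l).mul hA).add (hlog.mul hC)
  have hlin : HasDerivAt (fun t : ℝ => l*Real.log 2*(t+y)) (l*Real.log 2*1) x :=
    ((hasDerivAt_id x).add_const y).const_mul (l*Real.log 2)
  have H := (hxy.mul hg).sub hlin
  refine H.congr_deriv ?_
  unfold Fk1
  field_simp
  ring

lemma hasDeriv_Fk1 (y l : ℝ) (hy : 0 < y) {x : ℝ} (hx : 0 < x) :
    HasDerivAt (Fk1 y l) (Fk2 y l x) x := by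
  have hxp : (0:ℝ) < 1 + x := by linarith
  have hxy0 : (0:ℝ) < 1 + x*y := by nlinarith
  have hlog : HasDerivAt Real.log x⁻¹ x := Real.hasDerivAt_log hx.ne'
  have h1x : HasDerivAt (fun t : ℝ => 1+t) 1 x := (hasDerivAt_id x).const_add 1
  have hA : HasDerivAt (fun t : ℝ => Real.log (1+t)) (1/(1+x)) x := h1x.log hxp.ne'
  have hxy : HasDerivAt (fun t : ℝ => 1+t*y) y x := by
    simpa using ((hasDerivAt_id x).mul_const y).const_add 1
  have hC : HasDerivAt (fun t : ℝ => Real.log (1+t*y)) (y/(1+x*y)) x := hxy.log hxy0.ne'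
  have hg : HasDerivAt (fun t : ℝ => (l - Real.log t) * Real.log (1+t) + Real.log t * Real.log (1+t*y))
      ((-x⁻¹)*Real.log (1+x) + (l - Real.log x)*(1/(1+x))
        + (x⁻¹*Real.log (1+x*y) + Real.log x*(y/(1+x*y)))) x :=
    ((hlog.const_sub l).mul hA).add (hlog.mul hC)
  have hq1 : HasDerivAt (fun t : ℝ => (Real.log (1+t*y) - Real.log (1+t))/t)
      (((y/(1+x*y) - 1/(1+x))*x - (Real.log (1+x*y) - Real.log (1+x))*1)/x^2) x :=
    (hC.sub hA).div (hasDerivAt_id x) hx.ne'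
  have hq2 : HasDerivAt (fun t : ℝ => (l - Real.log t)/(1+t))
      (((-x⁻¹)*(1+x) - (l - Real.log x)*1)/(1+x)^2) x :=
    (hlog.const_sub l).div h1x hxp.ne'
  have hq3 : HasDerivAt (fun t : ℝ => y*Real.log t/(1+t*y))
      (((y*x⁻¹)*(1+x*y) - y*Real.log x*y)/(1+x*y)^2) x :=
    (hlog.const_mul y).div hxy hxy0.ne'
  have H := ((hg.const_mul y).add (hxy.mul ((hq1.add hq2).add hq3))).sub_const (l*Real.log 2)
  refine H.congr_deriv ?_
  unfold Fk2
  simp only [Pi.add_apply, Pi.mul_apply]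
  field_simp
  ring

lemma concave_Fk (y : ℝ) (hy0 : 0 < y) (hy1 : y < 1) {l : ℝ} (hl0 : 0 ≤ l) (hly : l*y ≤ 1-y) :
    ConcaveOn ℝ (Set.Icc y 1) (Fk y l) := by
  have hint : interior (Set.Icc y 1) = Set.Ioo y 1 := interior_Icc
  have hev : ∀ {x : ℝ}, 0 < x → deriv (Fk y l) =ᶠ[nhds x] Fk1 y l := by
    intro x hx0
    filter_upwards [Ioi_mem_nhds hx0] with z hz
    exact (hasDeriv_Fk y l hy0 hz).deriv
  apply concaveOn_of_deriv2_nonpos (convex_Icc y 1)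
  · intro x hx
    exact (hasDeriv_Fk y l hy0 (lt_of_lt_of_le hy0 hx.1)).continuousAt.continuousWithinAt
  · intro x hx
    rw [hint] at hx
    exact (hasDeriv_Fk y l hy0 (lt_trans hy0 hx.1)).differentiableAt.differentiableWithinAt
  · intro x hx
    rw [hint] at hx
    have hx0 : 0 < x := lt_trans hy0 hx.1
    exact (((hev hx0).differentiableAt_iff).2
      (hasDeriv_Fk1 y l hy0 hx0).differentiableAt).differentiableWithinAt
  · intro x hx
    rw [hint] at hx
    have hx0 : 0 < x := lt_trans hy0 hx.1
    have hx1 : x < 1 := hx.2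
    have hyx : y ≤ x := hx.1.le
    have hxp : (0:ℝ) < 1 + x := by linarith
    have hxy0 : (0:ℝ) < 1 + x*y := by nlinarith
    have h2 : deriv^[2] (Fk y l) x = Fk2 y l x := by
      show deriv (deriv (Fk y l)) x = _
      rw [(hev hx0).deriv_eq]
      exact (hasDeriv_Fk1 y l hy0 hx0).deriv
    rw [h2]
    have hAC0 : 0 ≤ Real.log (1+x) - Real.log (1+x*y) := by
      have := Real.log_le_log hxy0 (by nlinarith : 1+x*y ≤ 1+x)
      linarith
    have hAC : (Real.log (1+x) - Real.log (1+x*y))*(1+x*y) ≤ x*(1-y) := by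
      have h := Real.log_le_sub_one_of_pos (div_pos hxp hxy0)
      rw [Real.log_div hxp.ne' hxy0.ne'] at h
      have h3 := mul_le_mul_of_nonneg_right h hxy0.le
      have h4 : ((1+x)/(1+x*y) - 1)*(1+x*y) = x*(1-y) := by field_simp; ring
      linarith [h4 ▸ h3]
    have hlx0 : Real.log x ≤ 0 := Real.log_nonpos hx0.le hx1.le
    have hlx : (-Real.log x)*x ≤ 1-x := by
      have h := Real.log_le_sub_one_of_pos (inv_pos.2 hx0)
      rw [Real.log_inv] at h
      have h3 := mul_le_mul_of_nonneg_right h hx0.le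
      have h4 : (x⁻¹ - 1)*x = 1-x := by field_simp
      linarith [h4 ▸ h3]
    exact keyIneq hx0 hx1 hy0 hyx hAC0 hAC hlx0 hlx hl0 hly

lemma log_chord {w : ℝ} (h0 : 0 ≤ w) (h1 : w ≤ 1) : Real.log 2 * w ≤ Real.log (1+w) := by
  have hc := convexOn_exp.2 (Set.mem_univ (0:ℝ)) (Set.mem_univ (Real.log 2))
    (show (0:ℝ) ≤ 1 - w by linarith) h0 (by ring)
  simp only [smul_eq_mul, mul_zero, zero_add, Real.exp_zero, mul_one,
    Real.exp_log two_pos] at hc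
  have h2 : Real.exp (w * Real.log 2) ≤ 1 + w := by nlinarith [hc]
  have h3 : Real.log (Real.exp (w * Real.log 2)) ≤ Real.log (1+w) :=
    Real.log_le_log (by positivity) h2
  rwa [Real.log_exp, mul_comm] at h3

-- base case : Fk y (-log y) y ≥ 0
lemma base_Fk (y : ℝ) (hy0 : 0 < y) (hy1 : y < 1) : 0 ≤ Fk y (-Real.log y) y := by
  set l := -Real.log y with hl
  have hl0 : 0 ≤ l := by
    rw [hl]; simp only [neg_nonneg]; exact Real.log_nonpos hy0.le hy1.le
  have hyy : (0:ℝ) < 1 + y*y := by nlinarith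
  have hchord : Real.log 2 * (2*y/(1+y^2)) ≤ Real.log (1 + 2*y/(1+y^2)) := by
    apply log_chord (by positivity)
    rw [div_le_one (by positivity)]
    nlinarith [sq_nonneg (1-y)]
  have hrw : (1:ℝ) + 2*y/(1+y^2) = (1+y)^2/(1+y^2) := by field_simp; ring
  rw [hrw] at hchord
  have hlog2 : Real.log ((1+y)^2/(1+y^2)) = 2*Real.log (1+y) - Real.log (1+y*y) := by
    rw [show (1:ℝ)+y*y = 1+y^2 by ring, Real.log_div (by positivity) (by positivity),
      Real.log_pow]
    push_cast
    ring
  rw [hlog2] at hchord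
  have hbr : 2*y*Real.log 2 ≤ (1+y^2)*(2*Real.log (1+y) - Real.log (1+y*y)) := by
    have h3 := mul_le_mul_of_nonneg_left hchord (by positivity : (0:ℝ) ≤ 1+y^2)
    have h4 : (1+y^2)*(Real.log 2*(2*y/(1+y^2))) = 2*y*Real.log 2 := by field_simp
    linarith [h4 ▸ h3]
  have hlogy : Real.log y = -l := by rw [hl]; ring
  have hexp : Fk y l y = l*((1+y^2)*(2*Real.log (1+y) - Real.log (1+y*y)) - 2*y*Real.log 2) := by
    unfold Fk
    rw [hlogy]
    ring
  rw [hexp]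
  exact mul_nonneg hl0 (by linarith)

lemma edge_Fk (y l : ℝ) : Fk y l 1 = 0 := by
  unfold Fk
  simp [Real.log_one]
  rw [show (1:ℝ)+1 = 2 by norm_num]
  ring

lemma core_Fk (y x : ℝ) (hy0 : 0 < y) (hy1 : y < 1) (hyx : y ≤ x) (hx1 : x ≤ 1) :
    0 ≤ Fk y (-Real.log y) x := by
  set l := -Real.log y with hl
  have hl0 : 0 ≤ l := by
    rw [hl]; simp only [neg_nonneg]; exact Real.log_nonpos hy0.le hy1.le
  have hly : l*y ≤ 1-y := by
    have h := Real.log_le_sub_one_of_pos (inv_pos.2 hy0)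
    rw [Real.log_inv] at h
    have h3 := mul_le_mul_of_nonneg_right h hy0.le
    have h4 : (y⁻¹ - 1)*y = 1-y := by field_simp
    rw [hl]
    nlinarith [h4 ▸ h3]
  have hconc := concave_Fk y hy0 hy1 hl0 hly
  have hbase := base_Fk y hy0 hy1
  have hedge := edge_Fk y l
  -- x = a*y + b*1 with a = (1-x)/(1-y), b = (x-y)/(1-y)
  have hy1' : (0:ℝ) < 1 - y := by linarith
  have ha : (0:ℝ) ≤ (1-x)/(1-y) := div_nonneg (by linarith) hy1'.le
  have hb : (0:ℝ) ≤ (x-y)/(1-y) := by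
    apply div_nonneg (by linarith) hy1'.le
  have hab : (1-x)/(1-y) + (x-y)/(1-y) = 1 := by field_simp; ring
  have hcomb := hconc.2 (Set.mem_Icc.2 ⟨le_refl y, by linarith⟩)
    (Set.mem_Icc.2 ⟨hy1.le, le_refl 1⟩) ha hb hab
  simp only [smul_eq_mul] at hcomb
  have hx : (1-x)/(1-y)*y + (x-y)/(1-y)*1 = x := by field_simp; ring
  rw [hx] at hcomb
  rw [← hl] at hbase
  have h0 : 0 ≤ (1-x)/(1-y)*Fk y l y + (x-y)/(1-y)*Fk y l 1 := by
    rw [hedge, mul_zero, add_zero]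
    exact mul_nonneg ha hbase
  linarith [hcomb]

lemma star_ineq {x q : ℝ} (hx0 : 0 < x) (hx1 : x < 1) (hq : 2 ≤ q) :
    (q-1)*Real.log 2*(x + x^(q-1)) ≤ (1+x*(x^(q-1)))*(q*Real.log (1+x) - Real.log (1+x*(x^(q-1)))) := by
  set y := x^(q-1) with hy
  have hy0 : 0 < y := Real.rpow_pos_of_pos hx0 _
  have hyx : y ≤ x := by
    rw [hy]
    calc x^(q-1) ≤ x^(1:ℝ) := Real.rpow_le_rpow_of_exponent_ge hx0 hx1.le (by linarith)
      _ = x := Real.rpow_one x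
  have hy1 : y < 1 := lt_of_le_of_lt hyx hx1
  have hcore := core_Fk y x hy0 hy1 hyx hx1.le
  have hlogy : Real.log y = (q-1)*Real.log x := Real.log_rpow hx0 _
  have hlx : Real.log x < 0 := Real.log_neg hx0 hx1
  set B := (1+x*y)*(q*Real.log (1+x) - Real.log (1+x*y)) - (q-1)*Real.log 2*(x+y) with hB
  have hFkB : Fk y (-Real.log y) x = (-Real.log x)*B := by
    rw [hB]
    unfold Fk
    rw [hlogy]
    ring
  rw [hFkB] at hcore
  have hBnn : 0 ≤ B := by
    by_contra hc
    push_neg at hc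
    nlinarith [mul_pos (neg_pos.2 hlx) (neg_pos.2 hc)]
  linarith [hBnn]

lemma aux_ineq (a b : ℝ) (hb : 0 ≤ b) (hba : b ≤ a) (hab : a + b = 2) (q : ℝ) (hq : 2 ≤ q) :
    2/Real.log 2 * (1/(q-1)) * ((a^q+b^q)/2) * Real.log ((a^q+b^q)/2)
      ≤ (a^(q-1) - b^(q-1))*(a-b) := by
  have hq1 : (0:ℝ) < q - 1 := by linarith
  have hl2 : 0 < Real.log 2 := Real.log_pos (by norm_num)
  have ha0 : 0 < a := by linarith
  rcases eq_or_lt_of_le hb with hb0 | hb0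
  · -- b = 0
    have ha2 : a = 2 := by linarith [hb0]
    rw [← hb0, ha2]
    rw [Real.zero_rpow (by linarith : q - 1 ≠ 0), Real.zero_rpow (by linarith : q ≠ 0)]
    have h2q : (2:ℝ)^q = 2^(q-1)*2 := by
      nth_rewrite 1 [show q = (q-1)+1 by ring]
      rw [Real.rpow_add two_pos, Real.rpow_one]
    have hhalf : ((2:ℝ)^q + 0)/2 = 2^(q-1) := by rw [h2q]; ring
    rw [hhalf, Real.log_rpow two_pos]
    apply le_of_eq
    field_simp
    ring
  · rcases eq_or_lt_of_le hba with hba0 | hba0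
    · -- a = b = 1
      have ha1 : a = 1 := by linarith
      have hb1 : b = 1 := by linarith
      rw [ha1, hb1, Real.one_rpow, Real.one_rpow]
      norm_num
    · -- main case
      set x := b/a with hx
      have hx0 : 0 < x := div_pos hb0 ha0
      have hx1 : x < 1 := (div_lt_one ha0).2 hba0
      set y := x^(q-1) with hy
      have hy0 : 0 < y := Real.rpow_pos_of_pos hx0 _
      have hyx : y ≤ x := by
        rw [hy]
        calc x^(q-1) ≤ x^(1:ℝ) := Real.rpow_le_rpow_of_exponent_ge hx0 hx1.le (by linarith)
          _ = x := Real.rpow_one x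
      have hxyp : (0:ℝ) < 1 + x*y := by nlinarith
      have hxp : (0:ℝ) < 1 + x := by linarith
      have hbax : b = a*x := by rw [hx]; field_simp
      have e1 : b^(q-1) = a^(q-1)*y := by
        rw [hbax, Real.mul_rpow ha0.le hx0.le, hy]
      have exq : x^q = x*y := by
        nth_rewrite 1 [show q = 1+(q-1) by ring]
        rw [Real.rpow_add hx0, Real.rpow_one, hy]
      have e2 : b^q = a^q*(x*y) := by
        rw [hbax, Real.mul_rpow ha0.le hx0.le, exq]
      have e3 : a^q = a^(q-1)*a := by
        nth_rewrite 1 [show q = (q-1)+1 by ring]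
        rw [Real.rpow_add ha0, Real.rpow_one]
      have hA0 : 0 < a^(q-1) := Real.rpow_pos_of_pos ha0 _
      have hM : (a^q+b^q)/2 = a^(q-1)*a*(1+x*y)/2 := by rw [e2, e3]; ring
      have ha2 : a*(1+x) = 2 := by
        rw [hbax] at hab; linarith
      have haeq : a = 2/(1+x) := by
        field_simp
        linarith [ha2]
      have hloga : Real.log a = Real.log 2 - Real.log (1+x) := by
        rw [haeq, Real.log_div two_ne_zero hxp.ne']
      have hlogM : Real.log ((a^q+b^q)/2)
          = q*Real.log a + Real.log (1+x*y) - Real.log 2 := by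
        rw [hM, Real.log_div (by positivity) two_ne_zero,
          Real.log_mul (by positivity) hxyp.ne',
          Real.log_mul (ne_of_gt hA0) ha0.ne', Real.log_rpow ha0]
        ring
      have hstar := star_ineq hx0 hx1 hq
      rw [← hy] at hstar
      have hstep : (1+x*y)*(q*Real.log a + Real.log (1+x*y) - Real.log 2)
          ≤ (q-1)*Real.log 2*((1-y)*(1-x)) := by
        rw [hloga]
        nlinarith [hstar]
      have hgoal1 : 2/Real.log 2 * (1/(q-1)) * ((a^q+b^q)/2) * Real.log ((a^q+b^q)/2)
          = (a^(q-1)*a)/(Real.log 2*(q-1))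
            * ((1+x*y)*(q*Real.log a + Real.log (1+x*y) - Real.log 2)) := by
        rw [hlogM, hM]
        field_simp
      have hgoal2 : (a^(q-1) - b^(q-1))*(a-b)
          = (a^(q-1)*a)/(Real.log 2*(q-1)) * ((q-1)*Real.log 2*((1-y)*(1-x))) := by
        rw [e1, hbax]
        field_simp
      rw [hgoal1, hgoal2]
      exact mul_le_mul_of_nonneg_left hstep (by positivity)

theorem two_point_logSobolev_q_ge_two (g : Fin 2 → ℝ) (hg : ∀ i, 0 ≤ g i)
    (hmean : (g 0 + g 1) / 2 = 1) (q : ℝ) (hq : 2 ≤ q) :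
    (g 0 ^ (q - 1) - g 1 ^ (q - 1)) * (g 0 - g 1) ≥
      2 / Real.log 2 * (1 / (q - 1)) * ((g 0 ^ q + g 1 ^ q) / 2) *
        Real.log ((g 0 ^ q + g 1 ^ q) / 2) := by
  have h2 : g 0 + g 1 = 2 := by linarith
  rcases le_total (g 1) (g 0) with h | h
  · exact aux_ineq (g 0) (g 1) (hg 1) h h2 q hq
  · have H := aux_ineq (g 1) (g 0) (hg 0) h (by linarith) q hq
    have hcomm : g 0 ^ q + g 1 ^ q = g 1 ^ q + g 0 ^ q := add_comm _ _
    rw [ge_iff_le, hcomm]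
    have hring : (g 1^(q-1) - g 0^(q-1))*(g 1 - g 0)
        = (g 0^(q-1) - g 1^(q-1))*(g 0 - g 1) := by ring
    linarith [hring ▸ H]
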